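/- At the critical bias v = v_{c,1}, the function G satisfies G(x; v_{c,1}) ~ -τ²√(x - (v_{c,1}+2)) as x ↘ v_{c,1}+2; more precisely ∂ₓG(x; v_{c,1}) ~ -τ²/(2√(x-(v_{c,1}+2))) and G(v_{c,1}+2; v_{c,1}) = 0, so G(x;v_{c,1})/√(x-v_{c,1}-2) → -τ². -/

import Mathlib

open Filter Set

noncomputable def zeta1 (x : ℝ) : ℝ := x / 2 * (1 - Real.sqrt (1 - 4 / x ^ 2))

noncomputable def Gf (E₀ τ x v : ℝ) : ℝ := E₀ - x + τ ^ 2 * (zeta1 (x - v) + zeta1 x)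

lemma zeta1_eq {t : ℝ} (ht : 2 < t) :
    zeta1 t = (t - Real.sqrt (t ^ 2 - 4)) / 2 := by
  have ht0 : (0:ℝ) < t := by linarith
  have h1 : (1 : ℝ) - 4 / t ^ 2 = (t ^ 2 - 4) / t ^ 2 := by field_simp
  have h2 : Real.sqrt ((t ^ 2 - 4) / t ^ 2) = Real.sqrt (t ^ 2 - 4) / t := by
    rw [Real.sqrt_div (by nlinarith), Real.sqrt_sq ht0.le]
  unfold zeta1
  rw [h1, h2]
  field_simp

lemma hasDerivAt_zeta1 {t : ℝ} (ht : 2 < t) :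
    HasDerivAt zeta1 (1 / 2 - t / (2 * Real.sqrt (t ^ 2 - 4))) t := by
  have hpos : (0:ℝ) < t ^ 2 - 4 := by nlinarith
  have hs : Real.sqrt (t ^ 2 - 4) ≠ 0 := (Real.sqrt_pos.mpr hpos).ne'
  have h1 : HasDerivAt (fun y : ℝ => y ^ 2 - 4) (2 * t) t := by
    simpa using (hasDerivAt_pow 2 t).sub_const 4
  have h2 : HasDerivAt (fun y : ℝ => Real.sqrt (y ^ 2 - 4))
      (1 / (2 * Real.sqrt (t ^ 2 - 4)) * (2 * t)) t :=
    (Real.hasDerivAt_sqrt hpos.ne').comp t h1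
  have h3 : HasDerivAt (fun y : ℝ => (y - Real.sqrt (y ^ 2 - 4)) / 2)
      ((1 - 1 / (2 * Real.sqrt (t ^ 2 - 4)) * (2 * t)) / 2) t :=
    ((hasDerivAt_id t).sub h2).div_const 2
  have heq : zeta1 =ᶠ[nhds t] fun y : ℝ => (y - Real.sqrt (y ^ 2 - 4)) / 2 := by
    filter_upwards [eventually_gt_nhds ht] with y hy
    exact zeta1_eq hy
  have h4 := h3.congr_of_eventuallyEq heq
  refine h4.congr_deriv ?_
  field_simp

lemma zeta1_two : zeta1 2 = 1 := by
  norm_num [zeta1]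

/-- At the critical bias `v = v_{c,1}`: `G(v_{c,1}+2; v_{c,1}) = 0`,
`∂ₓG(x;v_{c,1}) ~ -τ²/(2√(x-v_{c,1}-2))` and `G(x;v_{c,1})/√(x-v_{c,1}-2) → -τ²`
as `x ↘ v_{c,1}+2`. -/
theorem stmt12 (E₀ : ℝ) (hE : 10 ≤ E₀) :
    ∃ τ₀ > (0 : ℝ), ∀ τ : ℝ, τ ≠ 0 → |τ| ≤ τ₀ →
      ∀ vc1 : ℝ, 4 < vc1 → Gf E₀ τ (2 + vc1) vc1 = 0 →
        Gf E₀ τ (vc1 + 2) vc1 = 0 ∧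
        Tendsto (fun x => Gf E₀ τ x vc1 / Real.sqrt (x - vc1 - 2))
          (nhdsWithin (vc1 + 2) (Set.Ioi (vc1 + 2))) (nhds (-τ ^ 2)) ∧
        Tendsto (fun x => deriv (fun y => Gf E₀ τ y vc1) x * (2 * Real.sqrt (x - vc1 - 2)))
          (nhdsWithin (vc1 + 2) (Set.Ioi (vc1 + 2))) (nhds (-τ ^ 2)) := by
  refine ⟨1, one_pos, ?_⟩
  intro τ hτ hτ1 v hv hG0
  have hG0' : Gf E₀ τ (v + 2) v = 0 := by rwa [show v + 2 = 2 + v by ring]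
  set c : ℝ := v + 2 with hcdef
  have hc2 : (2:ℝ) < c := by rw [hcdef]; linarith
  have hcd : Real.sqrt (c ^ 2 - 4) ≠ 0 :=
    (Real.sqrt_pos.mpr (by nlinarith)).ne'
  set l := nhdsWithin c (Set.Ioi c) with hl
  have hxl : Tendsto (fun x : ℝ => x) l (nhds c) :=
    Filter.tendsto_id.mono_left nhdsWithin_le_nhds
  have hsqrt0 : Tendsto (fun x : ℝ => Real.sqrt (x - c)) l (nhds 0) := by
    have hcont : Continuous fun x : ℝ => Real.sqrt (x - c) := by fun_prop
    have := (hcont.tendsto c).mono_left (nhdsWithin_le_nhds (s := Set.Ioi c))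
    simpa using this
  have h4 : Real.sqrt (4:ℝ) = 2 := by
    rw [show (4:ℝ) = 2 ^ 2 by norm_num]; exact Real.sqrt_sq (by norm_num)
  have hsqrt4 : Tendsto (fun x : ℝ => Real.sqrt (x - c + 4)) l (nhds 2) := by
    have hcont : Continuous fun x : ℝ => Real.sqrt (x - c + 4) := by fun_prop
    have := (hcont.tendsto c).mono_left (nhdsWithin_le_nhds (s := Set.Ioi c))
    simpa [h4] using this
  have hsqrtd : Tendsto (fun x : ℝ => Real.sqrt (x ^ 2 - 4)) l
      (nhds (Real.sqrt (c ^ 2 - 4))) := by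
    have hcont : Continuous fun x : ℝ => Real.sqrt (x ^ 2 - 4) := by fun_prop
    exact (hcont.tendsto c).mono_left (nhdsWithin_le_nhds (s := Set.Ioi c))
  -- derivative of Gf
  have hGd : ∀ x : ℝ, c < x → HasDerivAt (fun y => Gf E₀ τ y v)
      (-1 + τ ^ 2 * ((1/2 - (x - v)/(2 * Real.sqrt ((x - v) ^ 2 - 4)))
        + (1/2 - x/(2 * Real.sqrt (x ^ 2 - 4))))) x := by
    intro x hx
    have h1 : 2 < x - v := by rw [hcdef] at hx; linarith
    have h2 : 2 < x := by linarith
    have hz1 : HasDerivAt (fun y : ℝ => zeta1 (y - v))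
        ((1/2 - (x - v)/(2 * Real.sqrt ((x - v) ^ 2 - 4))) * 1) x :=
      by have := (hasDerivAt_zeta1 h1).comp x ((hasDerivAt_id x).sub_const v); exact this
    have h := ((hasDerivAt_const x E₀).sub (hasDerivAt_id x)).add
      ((hz1.add (hasDerivAt_zeta1 h2)).const_mul (τ ^ 2))
    simp only [Gf]
    refine h.congr_deriv ?_
    ring
  refine ⟨hG0', ?_, ?_⟩
  · -- limit of G / sqrt
    set hfun : ℝ → ℝ := fun x => E₀ - x + τ ^ 2 * ((x - v)/2 + zeta1 x) with hfdef
    have hc0 : hfun c = 0 := by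
      have : hfun c = Gf E₀ τ c v := by
        simp only [Gf, hfdef, hcdef]
        rw [show v + 2 - v = (2:ℝ) by ring, zeta1_two]
        ring
      rw [this]; exact hG0'
    have hd : HasDerivAt hfun
        (-1 + τ ^ 2 * (1/2 + (1/2 - c/(2 * Real.sqrt (c ^ 2 - 4))))) c := by
      have h := ((hasDerivAt_const c E₀).sub (hasDerivAt_id c)).add
        (((((hasDerivAt_id c).sub_const v).div_const 2).add (hasDerivAt_zeta1 hc2)).const_mul (τ ^ 2))
      refine h.congr_deriv ?_
      ring
    have hslope : Tendsto (slope hfun c) l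
        (nhds (-1 + τ ^ 2 * (1/2 + (1/2 - c/(2 * Real.sqrt (c ^ 2 - 4)))))) :=
      (hasDerivAt_iff_tendsto_slope.mp hd).mono_left
        (nhdsWithin_mono c (fun y hy => Set.mem_compl_singleton_iff.mpr (ne_of_gt hy)))
    have tC : Tendsto (fun x => slope hfun c x * Real.sqrt (x - c)
        - τ ^ 2 * (Real.sqrt (x - c + 4) / 2)) l
        (nhds ((-1 + τ ^ 2 * (1/2 + (1/2 - c/(2 * Real.sqrt (c ^ 2 - 4))))) * 0
          - τ ^ 2 * (2 / 2))) :=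
      (hslope.mul hsqrt0).sub ((hsqrt4.div_const 2).const_mul (τ ^ 2))
    have hvaleq : (-1 + τ ^ 2 * (1/2 + (1/2 - c/(2 * Real.sqrt (c ^ 2 - 4))))) * 0
        - τ ^ 2 * (2 / 2) = -τ ^ 2 := by ring
    rw [hvaleq] at tC
    refine Tendsto.congr' ?_ tC
    filter_upwards [self_mem_nhdsWithin] with x hx
    have hx' : c < x := hx
    have h1 : 2 < x - v := by rw [hcdef] at hx'; linarith
    have hxc : 0 < x - c := by linarith
    have ha : Real.sqrt (x - c) ≠ 0 := (Real.sqrt_pos.mpr hxc).ne'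
    have ha2 : Real.sqrt (x - c) * Real.sqrt (x - c) = x - c := Real.mul_self_sqrt hxc.le
    have hfact : Real.sqrt ((x - v) ^ 2 - 4) = Real.sqrt (x - c) * Real.sqrt (x - c + 4) := by
      rw [← Real.sqrt_mul hxc.le]
      congr 1
      rw [hcdef]; ring
    rw [slope_def_field, hc0, sub_zero]
    simp only [Gf, hfdef]
    rw [zeta1_eq h1, hfact, show x - v - 2 = x - c by rw [hcdef]; ring]
    set b : ℝ := Real.sqrt (x - c + 4) with hbdef
    set a : ℝ := Real.sqrt (x - c) with hadef
    rw [← ha2]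
    field_simp
    ring
  · -- limit of deriv * 2 sqrt
    have t1 : Tendsto (fun x : ℝ => x / (2 * Real.sqrt (x ^ 2 - 4))) l
        (nhds (c / (2 * Real.sqrt (c ^ 2 - 4)))) :=
      hxl.div (hsqrtd.const_mul 2) (by simpa using hcd)
    have tB : Tendsto (fun x : ℝ =>
        (-1 + τ ^ 2 * (1/2 + (1/2 - x/(2 * Real.sqrt (x ^ 2 - 4))))) * (2 * Real.sqrt (x - c))
          - τ ^ 2 * ((x - v) / Real.sqrt (x - c + 4))) l
        (nhds ((-1 + τ ^ 2 * (1/2 + (1/2 - c/(2 * Real.sqrt (c ^ 2 - 4))))) * (2 * 0)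
          - τ ^ 2 * ((c - v) / 2))) := by
      refine Tendsto.sub ?_ ?_
      · exact (tendsto_const_nhds.add (((tendsto_const_nhds.sub t1).const_add (1/2)).const_mul
          (τ ^ 2))).mul (hsqrt0.const_mul 2)
      · exact ((hxl.sub tendsto_const_nhds).div hsqrt4 two_ne_zero).const_mul (τ ^ 2)
    have hvaleq : (-1 + τ ^ 2 * (1/2 + (1/2 - c/(2 * Real.sqrt (c ^ 2 - 4))))) * (2 * 0)
        - τ ^ 2 * ((c - v) / 2) = -τ ^ 2 := by rw [hcdef]; ring
    rw [hvaleq] at tB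
    refine Tendsto.congr' ?_ tB
    filter_upwards [self_mem_nhdsWithin] with x hx
    have hx' : c < x := hx
    have h1 : 2 < x - v := by rw [hcdef] at hx'; linarith
    have h2 : 2 < x := by linarith
    have hxc : 0 < x - c := by linarith
    have ha : Real.sqrt (x - c) ≠ 0 := (Real.sqrt_pos.mpr hxc).ne'
    have hb : Real.sqrt (x - c + 4) ≠ 0 := (Real.sqrt_pos.mpr (by linarith)).ne'
    have hdne : Real.sqrt (x ^ 2 - 4) ≠ 0 := (Real.sqrt_pos.mpr (by nlinarith)).ne'
    have hfact : Real.sqrt ((x - v) ^ 2 - 4) = Real.sqrt (x - c) * Real.sqrt (x - c + 4) := by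
      rw [← Real.sqrt_mul hxc.le]
      congr 1
      rw [hcdef]; ring
    rw [show x - v - 2 = x - c by rw [hcdef]; ring]
    rw [(hGd x hx').deriv, hfact]
    field_simp
    ring
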